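/- Diagonalization of the reflection for a tensor product of Markov chains (core of the tensor-product theorem): let P_1, P_2 be column-stochastic matrices of sizes N_1, N_2 with column states φ_{i,1}, φ_{j,2}. Suppose there are b_1 ∈ {0,…,N_1−1}, b_2 ∈ {0,…,N_2−1} and unitaries U_{i,1} (N_1×N_1) and V_{j,2} (N_2×N_2) with U_{i,1} φ_{i,1} = e_{b_1} for all i and V_{j,2} φ_{j,2} = e_{b_2} for all j. On ℂ^{N_1} ⊗ ℂ^{N_2} ⊗ ℂ^{N_1} ⊗ ℂ^{N_2}, define R = 2 Σ_{i,j} (e_i ⊗ e_j)(e_i ⊗ e_j)† ⊗ (φ_{i,1} ⊗ φ_{j,2})(φ_{i,1} ⊗ φ_{j,2})† − I and W = Σ_{i,j} (e_i ⊗ e_j)(e_i ⊗ e_j)† ⊗ U_{i,1} ⊗ V_{j,2}. Then W is unitary and W R W† = I_{N_1 N_2} ⊗ (2 (e_{b_1} ⊗ e_{b_2})(e_{b_1} ⊗ e_{b_2})† − I_{N_1 N_2}). -/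
import Mathlib


open Matrix BigOperators

/-- The `i`-th column state of the transition matrix `P`: `(φ_i)_j = √(P_{j,i})`. -/
noncomputable def colState {N : ℕ} (P : Matrix (Fin N) (Fin N) ℝ) (i : Fin N) :
    Fin N → ℂ :=
  fun j => (Real.sqrt (P j i) : ℂ)

/-- The Szegedy reflection `R = 2 Σ_{i,j} |ij⟩⟨ij| ⊗ |φ_{i,1} φ_{j,2}⟩⟨φ_{i,1} φ_{j,2}| − I`
for the tensor product of two Markov chains, with registers ordered as
(register 1 of chain 1, register 1 of chain 2, register 2 of chain 1, register 2 of
chain 2). -/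
noncomputable def tensorReflection {N1 N2 : ℕ}
    (P1 : Matrix (Fin N1) (Fin N1) ℝ) (P2 : Matrix (Fin N2) (Fin N2) ℝ) :
    Matrix ((Fin N1 × Fin N2) × (Fin N1 × Fin N2))
      ((Fin N1 × Fin N2) × (Fin N1 × Fin N2)) ℂ :=
  Matrix.of (fun p q =>
    2 * (if p.1 = q.1 then 1 else 0) *
        (colState P1 p.1.1 p.2.1 * colState P2 p.1.2 p.2.2) *
        (starRingEnd ℂ) (colState P1 p.1.1 q.2.1 * colState P2 p.1.2 q.2.2) -
      (if p = q then 1 else 0))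

/-- The block-diagonal operator `W = Σ_{i,j} |ij⟩⟨ij| ⊗ U_{i,1} ⊗ V_{j,2}`. -/
def tensorBlockDiag {N1 N2 : ℕ}
    (U : Fin N1 → Matrix (Fin N1) (Fin N1) ℂ)
    (V : Fin N2 → Matrix (Fin N2) (Fin N2) ℂ) :
    Matrix ((Fin N1 × Fin N2) × (Fin N1 × Fin N2))
      ((Fin N1 × Fin N2) × (Fin N1 × Fin N2)) ℂ :=
  Matrix.of (fun p q =>
    (if p.1 = q.1 then 1 else 0) * (U p.1.1 p.2.1 q.2.1 * V p.1.2 p.2.2 q.2.2))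

lemma rowUnitary {n : ℕ} {M : Matrix (Fin n) (Fin n) ℂ}
    (hM : M ∈ Matrix.unitaryGroup (Fin n) ℂ) (a b : Fin n) :
    ∑ x, M a x * (starRingEnd ℂ) (M b x) = if a = b then 1 else 0 := by
  have h := Matrix.mem_unitaryGroup_iff.mp hM
  have h2 : (M * star M) a b = (1 : Matrix (Fin n) (Fin n) ℂ) a b := by rw [h]
  simpa [Matrix.mul_apply, Matrix.one_apply, Matrix.star_eq_conjTranspose,
    Matrix.conjTranspose_apply] using h2

lemma sumRow {n : ℕ} {M : Matrix (Fin n) (Fin n) ℂ} {v : Fin n → ℂ} {b : Fin n}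
    (h : M.mulVec v = Pi.single b 1) (a : Fin n) :
    ∑ x, M a x * v x = if a = b then 1 else 0 := by
  have := congrFun h a
  simpa [Matrix.mulVec, dotProduct, Pi.single_apply] using this

section main
variable {N1 N2 : ℕ}
    (P1 : Matrix (Fin N1) (Fin N1) ℝ) (P2 : Matrix (Fin N2) (Fin N2) ℝ)
    (b1 : Fin N1) (b2 : Fin N2)
    (U : Fin N1 → Matrix (Fin N1) (Fin N1) ℂ)
    (V : Fin N2 → Matrix (Fin N2) (Fin N2) ℂ)

noncomputable def projMat :
    Matrix ((Fin N1 × Fin N2) × (Fin N1 × Fin N2))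
      ((Fin N1 × Fin N2) × (Fin N1 × Fin N2)) ℂ :=
  Matrix.of (fun p q =>
    (if p.1 = q.1 then 1 else 0) *
        (colState P1 p.1.1 p.2.1 * colState P2 p.1.2 p.2.2) *
        (starRingEnd ℂ) (colState P1 p.1.1 q.2.1 * colState P2 p.1.2 q.2.2))

lemma WW_eq_one
    (hU : ∀ i, U i ∈ Matrix.unitaryGroup (Fin N1) ℂ)
    (hV : ∀ j, V j ∈ Matrix.unitaryGroup (Fin N2) ℂ) :
    tensorBlockDiag U V * (tensorBlockDiag U V)ᴴ = 1 := by
  ext ⟨pa, pb⟩ ⟨qa, qb⟩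
  rw [Matrix.mul_apply]
  simp only [tensorBlockDiag, Matrix.conjTranspose_apply, Matrix.of_apply]
  rw [Fintype.sum_prod_type, Finset.sum_comm]
  by_cases h : pa = qa
  · subst h
    simp only [ite_mul, mul_ite, mul_zero, zero_mul, one_mul, star_zero, mul_one,
      apply_ite (star : ℂ → ℂ), Finset.sum_ite_eq, Finset.sum_ite_eq', Finset.mem_univ, if_true]
    have key : ∀ (x : Fin N1 × Fin N2),
        U pa.1 pb.1 x.1 * V pa.2 pb.2 x.2 * star (U pa.1 qb.1 x.1 * V pa.2 qb.2 x.2)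
          = (U pa.1 pb.1 x.1 * (starRingEnd ℂ) (U pa.1 qb.1 x.1)) *
            (V pa.2 pb.2 x.2 * (starRingEnd ℂ) (V pa.2 qb.2 x.2)) := by
      intro x
      simp only [starRingEnd_apply, star_mul']
      ring
    simp only [key]
    rw [Fintype.sum_prod_type]
    simp only [← Finset.mul_sum]
    rw [← Finset.sum_mul, rowUnitary (hU pa.1), rowUnitary (hV pa.2)]
    by_cases h1 : pb.1 = qb.1 <;> by_cases h2 : pb.2 = qb.2 <;>
      simp [h1, h2, Matrix.one_apply, Prod.ext_iff]
  · have hq : ¬ ((pa, pb) : (Fin N1 × Fin N2) × (Fin N1 × Fin N2)) = (qa, qb) :=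
      fun hh => h (congrArg Prod.fst hh)
    rw [Matrix.one_apply_ne hq]
    refine Finset.sum_eq_zero fun x2 _ => Finset.sum_eq_zero fun x1 _ => ?_
    by_cases hx : pa = x1
    · subst hx
      have h' : ¬ (qa = pa) := fun hh => h hh.symm
      simp [h']
    · simp [hx]
end main

section more
variable {N1 N2 : ℕ}
    (P1 : Matrix (Fin N1) (Fin N1) ℝ) (P2 : Matrix (Fin N2) (Fin N2) ℝ)
    (b1 : Fin N1) (b2 : Fin N2)
    (U : Fin N1 → Matrix (Fin N1) (Fin N1) ℂ)
    (V : Fin N2 → Matrix (Fin N2) (Fin N2) ℂ)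

lemma sumRowConj {n : ℕ} {M : Matrix (Fin n) (Fin n) ℂ} {v : Fin n → ℂ} {b : Fin n}
    (h : M.mulVec v = Pi.single b 1) (hv : ∀ x, (starRingEnd ℂ) (v x) = v x) (a : Fin n) :
    ∑ x, (starRingEnd ℂ) (M a x) * v x = if a = b then 1 else 0 := by
  have key : ∀ x, (starRingEnd ℂ) (M a x) * v x = (starRingEnd ℂ) (M a x * v x) := by
    intro x; rw [_root_.map_mul, hv x]
  rw [Finset.sum_congr rfl (fun x _ => key x), ← map_sum, sumRow h a]
  simp [apply_ite (starRingEnd ℂ)]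

lemma WPi (hUphi : ∀ i, (U i).mulVec (colState P1 i) = Pi.single b1 1)
    (hVphi : ∀ j, (V j).mulVec (colState P2 j) = Pi.single b2 1) :
    tensorBlockDiag U V * projMat P1 P2 = Matrix.of (fun p s =>
      (if p.1 = s.1 then 1 else 0) *
        ((if p.2.1 = b1 then 1 else 0) * (if p.2.2 = b2 then 1 else 0)) *
        (starRingEnd ℂ) (colState P1 p.1.1 s.2.1 * colState P2 p.1.2 s.2.2)) := by
  ext ⟨pa, pb⟩ ⟨sa, sb⟩
  rw [Matrix.mul_apply]
  simp only [tensorBlockDiag, projMat, Matrix.of_apply]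
  rw [Fintype.sum_prod_type, Finset.sum_comm]
  simp only [ite_mul, mul_ite, mul_zero, zero_mul, one_mul,
    Finset.sum_ite_eq, Finset.sum_ite_eq', Finset.mem_univ, if_true]
  by_cases h : pa = sa
  · subst h
    simp only [if_true]
    have key : ∀ r2 : Fin N1 × Fin N2,
        U pa.1 pb.1 r2.1 * V pa.2 pb.2 r2.2 *
            (colState P1 pa.1 r2.1 * colState P2 pa.2 r2.2 *
              (starRingEnd ℂ) (colState P1 pa.1 sb.1 * colState P2 pa.2 sb.2))
          = ((U pa.1 pb.1 r2.1 * colState P1 pa.1 r2.1) *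
              (V pa.2 pb.2 r2.2 * colState P2 pa.2 r2.2)) *
            (starRingEnd ℂ) (colState P1 pa.1 sb.1 * colState P2 pa.2 sb.2) := by
      intro r2; ring
    simp only [key]
    rw [← Finset.sum_mul, Fintype.sum_prod_type]
    simp only [← Finset.mul_sum]
    rw [← Finset.sum_mul, sumRow (hUphi pa.1), sumRow (hVphi pa.2)]
    by_cases h1 : pb.1 = b1 <;> by_cases h2 : pb.2 = b2 <;> simp [h1, h2]
  · simp [h]
end more

section more2
variable {N1 N2 : ℕ}
    (P1 : Matrix (Fin N1) (Fin N1) ℝ) (P2 : Matrix (Fin N2) (Fin N2) ℝ)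
    (b1 : Fin N1) (b2 : Fin N2)
    (U : Fin N1 → Matrix (Fin N1) (Fin N1) ℂ)
    (V : Fin N2 → Matrix (Fin N2) (Fin N2) ℂ)

lemma conj_colState {N : ℕ} (P : Matrix (Fin N) (Fin N) ℝ) (i j : Fin N) :
    (starRingEnd ℂ) (colState P i j) = colState P i j := by
  simp [colState]

lemma WPiW (hUphi : ∀ i, (U i).mulVec (colState P1 i) = Pi.single b1 1)
    (hVphi : ∀ j, (V j).mulVec (colState P2 j) = Pi.single b2 1) :
    tensorBlockDiag U V * projMat P1 P2 * (tensorBlockDiag U V)ᴴ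
      = Matrix.of (fun p q =>
        (if p.1 = q.1 then 1 else 0) *
          ((if p.2.1 = b1 then 1 else 0) * (if p.2.2 = b2 then 1 else 0)) *
          ((if q.2.1 = b1 then 1 else 0) * (if q.2.2 = b2 then 1 else 0))) := by
  rw [WPi P1 P2 b1 b2 U V hUphi hVphi]
  ext ⟨pa, pb⟩ ⟨qa, qb⟩
  rw [Matrix.mul_apply]
  simp only [tensorBlockDiag, Matrix.conjTranspose_apply, Matrix.of_apply,
    apply_ite (star : ℂ → ℂ), star_zero]
  rw [Fintype.sum_prod_type, Finset.sum_comm]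
  simp only [ite_mul, mul_ite, mul_zero, zero_mul, one_mul, mul_one,
    Finset.sum_ite_eq, Finset.sum_ite_eq', Finset.mem_univ, if_true]
  by_cases h : pa = qa
  · subst h
    simp only [if_true]
    by_cases h1 : pb.1 = b1 <;> by_cases h2 : pb.2 = b2 <;>
      simp only [h1, h2, if_true, if_neg, if_pos] <;>
      [skip; simp [h2]; simp [h1]; simp [h1]]
    simp only [Finset.sum_ite_irrel, Finset.sum_ite_eq, Finset.sum_ite_eq',
      Finset.mem_univ, if_true]
    have key : ∀ x : Fin N1 × Fin N2,
        (starRingEnd ℂ) (colState P1 pa.1 x.1 * colState P2 pa.2 x.2) *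
            star (U pa.1 qb.1 x.1 * V pa.2 qb.2 x.2)
          = ((starRingEnd ℂ) (U pa.1 qb.1 x.1) * colState P1 pa.1 x.1) *
            ((starRingEnd ℂ) (V pa.2 qb.2 x.2) * colState P2 pa.2 x.2) := by
      intro x
      simp only [← starRingEnd_apply, _root_.map_mul, conj_colState]
      ring
    simp only [key]
    rw [Fintype.sum_prod_type]
    simp only [← Finset.mul_sum]
    rw [← Finset.sum_mul, sumRowConj (hUphi pa.1) (conj_colState P1 pa.1),
      sumRowConj (hVphi pa.2) (conj_colState P2 pa.2)]
    by_cases g1 : qb.1 = b1 <;> by_cases g2 : qb.2 = b2 <;> simp [g1, g2]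
  · have h' : ¬ (qa = pa) := fun hh => h hh.symm
    simp [h, h']
end more2


/-- Diagonalization of the Szegedy reflection for a tensor product of Markov chains:
if `U_{i,1} φ_{i,1} = e_{b_1}` and `V_{j,2} φ_{j,2} = e_{b_2}` with all `U_{i,1}`,
`V_{j,2}` unitary, then `W` is unitary and
`W R W† = I_{N_1 N_2} ⊗ (2 (e_{b_1} ⊗ e_{b_2})(e_{b_1} ⊗ e_{b_2})† − I_{N_1 N_2})`. -/
theorem tensorProduct_reflection_diagonalization (N1 N2 : ℕ)
    (hN1 : 1 ≤ N1) (hN2 : 1 ≤ N2)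
    (P1 : Matrix (Fin N1) (Fin N1) ℝ) (P2 : Matrix (Fin N2) (Fin N2) ℝ)
    (h1nonneg : ∀ a i, 0 ≤ P1 a i) (h1col : ∀ i, ∑ a, P1 a i = 1)
    (h2nonneg : ∀ b j, 0 ≤ P2 b j) (h2col : ∀ j, ∑ b, P2 b j = 1)
    (b1 : Fin N1) (b2 : Fin N2)
    (U : Fin N1 → Matrix (Fin N1) (Fin N1) ℂ)
    (V : Fin N2 → Matrix (Fin N2) (Fin N2) ℂ)
    (hU : ∀ i, U i ∈ Matrix.unitaryGroup (Fin N1) ℂ)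
    (hV : ∀ j, V j ∈ Matrix.unitaryGroup (Fin N2) ℂ)
    (hUphi : ∀ i, (U i).mulVec (colState P1 i) = Pi.single b1 1)
    (hVphi : ∀ j, (V j).mulVec (colState P2 j) = Pi.single b2 1) :
    tensorBlockDiag U V ∈
        Matrix.unitaryGroup ((Fin N1 × Fin N2) × (Fin N1 × Fin N2)) ℂ ∧
    tensorBlockDiag U V * tensorReflection P1 P2 * (tensorBlockDiag U V)ᴴ
      = Matrix.of (fun p q : (Fin N1 × Fin N2) × (Fin N1 × Fin N2) =>
          (if p.1 = q.1 then 1 else 0) *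
            (2 * (if p.2 = (b1, b2) then 1 else 0) * (if q.2 = (b1, b2) then 1 else 0) -
              (if p.2 = q.2 then 1 else 0))) := by
  have hW := WW_eq_one U V hU hV
  refine ⟨Matrix.mem_unitaryGroup_iff.mpr (by rw [Matrix.star_eq_conjTranspose]; exact hW), ?_⟩
  have hR : tensorReflection P1 P2 = (2 : ℂ) • projMat P1 P2 - 1 := by
    ext p q
    simp only [tensorReflection, projMat, Matrix.sub_apply, Matrix.smul_apply,
      Matrix.of_apply, Matrix.one_apply, smul_eq_mul]
    ring
  rw [hR, Matrix.mul_sub, Matrix.mul_one, Matrix.sub_mul, Matrix.mul_smul,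
    Matrix.smul_mul, WPiW P1 P2 b1 b2 U V hUphi hVphi, hW]
  ext ⟨pa, pb⟩ ⟨qa, qb⟩
  simp only [Matrix.sub_apply, Matrix.smul_apply, Matrix.of_apply, Matrix.one_apply,
    smul_eq_mul, Prod.mk.injEq]
  have e1 : (if pb = (b1, b2) then (1:ℂ) else 0)
      = (if pb.1 = b1 then 1 else 0) * (if pb.2 = b2 then 1 else 0) := by
    by_cases h1 : pb.1 = b1 <;> by_cases h2 : pb.2 = b2 <;> simp [Prod.ext_iff, h1, h2]
  have e2 : (if qb = (b1, b2) then (1:ℂ) else 0)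
      = (if qb.1 = b1 then 1 else 0) * (if qb.2 = b2 then 1 else 0) := by
    by_cases h1 : qb.1 = b1 <;> by_cases h2 : qb.2 = b2 <;> simp [Prod.ext_iff, h1, h2]
  have e3 : (if pa = qa ∧ pb = qb then (1:ℂ) else 0)
      = (if pa = qa then 1 else 0) * (if pb = qb then 1 else 0) := by
    by_cases h1 : pa = qa <;> by_cases h2 : pb = qb <;> simp [h1, h2]
  rw [e1, e2, e3]
  ring
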